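/- Let n be an even positive integer and let k be an integer with 1 ≤ k ≤ n−2. Then R_{n,k} = R_{n−1,k−1} − R_{n−1,k}. -/

import Mathlib

open Finset

/-- Number of ascents of a permutation of `[n]` (positions `i` with `a_i < a_{i+1}`). -/
def ascents {n : ℕ} (A : Equiv.Perm (Fin n)) : ℕ :=
  (univ.filter fun i : Fin n => ∃ h : i.val + 1 < n, A i < A ⟨i.val + 1, h⟩).card

/-- Number of inversions of a permutation. -/
def invNum {n : ℕ} (A : Equiv.Perm (Fin n)) : ℕ :=
  (univ.filter fun p : Fin n × Fin n => p.1 < p.2 ∧ A p.2 < A p.1).card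

/-- A permutation is parity-alternate if consecutive entries have different parity. -/
def IsPAP {n : ℕ} (A : Equiv.Perm (Fin n)) : Prop :=
  ∀ i : Fin n, ∀ h : i.val + 1 < n, (A i).val % 2 ≠ (A ⟨i.val + 1, h⟩).val % 2

instance {n : ℕ} (A : Equiv.Perm (Fin n)) : Decidable (IsPAP A) := by
  unfold IsPAP; infer_instance

/-- `P_{n,k}`: number of even parity-alternate permutations of `[n]` with `k` ascents. -/
def papEven (n k : ℕ) : ℕ :=
  (univ.filter fun A : Equiv.Perm (Fin n) => IsPAP A ∧ ascents A = k ∧ Even (invNum A)).card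

/-- `Q_{n,k}`: number of odd parity-alternate permutations of `[n]` with `k` ascents. -/
def papOdd (n k : ℕ) : ℕ :=
  (univ.filter fun A : Equiv.Perm (Fin n) => IsPAP A ∧ ascents A = k ∧ Odd (invNum A)).card

/-- `S_{n,k}`: number of parity-alternate permutations of `[n]` with `k` ascents. -/
def papTotal (n k : ℕ) : ℕ :=
  (univ.filter fun A : Equiv.Perm (Fin n) => IsPAP A ∧ ascents A = k).card

/-- `R_{n,k} = P_{n,k} - Q_{n,k}`. -/
def papSigned (n k : ℕ) : ℤ := (papEven n k : ℤ) - papOdd n k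

/-- `B_{n,k}`: number of even permutations of `[n]` with `k` ascents. -/
def eulerEven (n k : ℕ) : ℕ :=
  (univ.filter fun A : Equiv.Perm (Fin n) => ascents A = k ∧ Even (invNum A)).card

/-- `C_{n,k}`: number of odd permutations of `[n]` with `k` ascents. -/
def eulerOdd (n k : ℕ) : ℕ :=
  (univ.filter fun A : Equiv.Perm (Fin n) => ascents A = k ∧ Odd (invNum A)).card

/-- `D_{n,k} = B_{n,k} - C_{n,k}`: the signed Eulerian number. -/
def eulerSigned (n k : ℕ) : ℤ := (eulerEven n k : ℤ) - eulerOdd n k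

namespace PapAux
open Equiv Equiv.Perm

noncomputable def sgn {n : ℕ} (A : Equiv.Perm (Fin n)) : ℤ := ((Perm.sign A : ℤˣ) : ℤ)

lemma signAux_eq_sign {n : ℕ} (hn : 2 ≤ n) (A : Equiv.Perm (Fin n)) :
    Perm.signAux A = Perm.sign A := by
  have hsurj : Function.Surjective (MonoidHom.mk' (Perm.signAux (n := n)) Perm.signAux_mul) := by
    intro u
    rcases Int.units_eq_one_or u with rfl | rfl
    · exact ⟨1, Perm.signAux_one n⟩
    · refine ⟨Equiv.swap ⟨0, by omega⟩ ⟨1, by omega⟩, Perm.signAux_swap ?_⟩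
      simp [Fin.ext_iff]
  exact DFunLike.congr_fun (Perm.eq_sign_of_surjective_hom hsurj) A

lemma sgn_eq_pow {n : ℕ} (A : Equiv.Perm (Fin n)) :
    sgn A = (-1 : ℤ) ^ invNum A := by
  rcases lt_or_ge n 2 with hn | hn
  · have hA : A = 1 := by
      ext i
      interval_cases n
      · exact absurd i.2 (by omega)
      · omega
    subst hA
    have : invNum (1 : Equiv.Perm (Fin n)) = 0 := by
      rw [invNum, Finset.card_eq_zero, Finset.filter_eq_empty_iff]
      rintro ⟨a, b⟩ _ ⟨h1, h2⟩
      exact absurd h2 (by simp; exact le_of_lt h1)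
    rw [this, sgn]; simp
  · have h1 : Perm.sign A = Perm.signAux A := (signAux_eq_sign hn A).symm
    have h2 : ((Equiv.Perm.finPairsLT n).filter (fun x => A x.1 ≤ A x.2)).card = invNum A := by
      apply Finset.card_nbij (fun x => (x.2, x.1))
      · rintro ⟨a, b⟩ hx
        simp only [Finset.mem_coe, mem_filter, Equiv.Perm.mem_finPairsLT] at hx
        simp only [Finset.mem_coe, mem_filter, mem_univ, true_and]
        exact ⟨hx.1, lt_of_le_of_ne hx.2 (fun h => absurd (A.injective h) (ne_of_gt hx.1))⟩
      · rintro ⟨a1, b1⟩ h1 ⟨a2, b2⟩ h2 h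
        simp only [Prod.mk.injEq] at h
        simp [h.1, h.2]
      · rintro ⟨a, b⟩ hx
        simp only [Finset.coe_filter, Set.mem_setOf_eq, mem_univ, true_and] at hx
        refine ⟨⟨b, a⟩, ?_, rfl⟩
        simp only [coe_filter, Equiv.Perm.mem_finPairsLT, Set.mem_setOf_eq]
        exact ⟨hx.1, le_of_lt hx.2⟩
    rw [sgn, h1, Perm.signAux, Finset.prod_ite, Finset.prod_const, Finset.prod_const,
      one_pow, mul_one, h2]
    push_cast
    rfl


lemma addone_ne_zero {m : ℕ} {x : Fin (m+1)} (hx : x ≠ Fin.last m) : x + 1 ≠ 0 := by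
  intro h; apply hx
  have := Fin.val_add_one x
  rw [h] at this
  simp only [Fin.val_zero] at this
  split at this
  · assumption
  · omega

lemma addone_lt_addone {m : ℕ} {x y : Fin (m+1)} (hx : x ≠ Fin.last m) (hy : y ≠ Fin.last m) :
    x + 1 < y + 1 ↔ x < y := by
  have h1 := Fin.val_add_one x
  have h2 := Fin.val_add_one y
  rw [if_neg hx] at h1
  rw [if_neg hy] at h2
  rw [Fin.lt_def, Fin.lt_def, h1, h2]
  omega

lemma rot_apply {m : ℕ} (A : Equiv.Perm (Fin (m+1))) (i : Fin (m+1)) :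
    (finRotate (m+1) * A) i = A i + 1 := by
  simp [Equiv.Perm.mul_apply]

lemma ne_last_of_ne {m : ℕ} (A : Equiv.Perm (Fin (m+1))) {p i : Fin (m+1)}
    (hp : A p = Fin.last m) (hip : i ≠ p) : A i ≠ Fin.last m := by
  intro h; exact hip (A.injective (h.trans hp.symm))

/-- ascents set -/
def ascSet {n : ℕ} (A : Equiv.Perm (Fin n)) : Finset (Fin n) :=
  univ.filter fun i : Fin n => ∃ h : i.val + 1 < n, A i < A ⟨i.val + 1, h⟩

lemma ascents_eq {n : ℕ} (A : Equiv.Perm (Fin n)) : ascents A = (ascSet A).card := rfl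

lemma mem_ascSet {n : ℕ} (A : Equiv.Perm (Fin n)) (i : Fin n) :
    i ∈ ascSet A ↔ ∃ h : i.val + 1 < n, A i < A ⟨i.val + 1, h⟩ := by
  simp [ascSet]

lemma ascents_rotate_front {m : ℕ} (hm : 0 < m) (A : Equiv.Perm (Fin (m+1)))
    (h : A 0 = Fin.last m) :
    ascents (finRotate (m+1) * A) = ascents A + 1 := by
  have h0 : (0 : Fin (m+1)) ∉ ascSet A := by
    rw [mem_ascSet]
    rintro ⟨h', hlt⟩
    rw [h] at hlt
    exact absurd (Fin.le_last _) (not_le.mpr hlt)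
  have key : ascSet (finRotate (m+1) * A) = insert 0 (ascSet A) := by
    ext i
    rw [mem_ascSet, mem_insert, mem_ascSet]
    by_cases hi : i = 0
    · subst hi
      simp only [true_or, iff_true]
      refine ⟨show (0:Fin (m+1)).val + 1 < m + 1 from by simp; omega, ?_⟩
      rw [rot_apply, rot_apply, h, Fin.last_add_one]
      refine Fin.pos_of_ne_zero (addone_ne_zero (ne_last_of_ne A h ?_))
      intro he
      have : (0:Fin (m+1)).val + 1 = (0:Fin (m+1)).val := congrArg Fin.val he
      omega
    · have hko : ∀ h' : i.val + 1 < m + 1,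
          ((finRotate (m+1) * A) i < (finRotate (m+1) * A) ⟨i.val + 1, h'⟩ ↔
            A i < A ⟨i.val + 1, h'⟩) := by
        intro h'
        rw [rot_apply, rot_apply]
        refine addone_lt_addone (ne_last_of_ne A h hi) (ne_last_of_ne A h ?_)
        intro he
        have : i.val + 1 = (0:Fin (m+1)).val := congrArg Fin.val he
        simp at this
      simp only [hi, false_or]
      constructor
      · rintro ⟨h', hlt⟩; exact ⟨h', (hko h').1 hlt⟩
      · rintro ⟨h', hlt⟩; exact ⟨h', (hko h').2 hlt⟩
  rw [ascents_eq, ascents_eq, key, card_insert_of_notMem h0]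

lemma ascents_rotate_back {m : ℕ} (hm : 0 < m) (A : Equiv.Perm (Fin (m+1)))
    (h : A (Fin.last m) = Fin.last m) :
    ascents A = ascents (finRotate (m+1) * A) + 1 := by
  have hlast : (⟨m - 1, by omega⟩ : Fin (m+1)) ∉ ascSet (finRotate (m+1) * A) := by
    rw [mem_ascSet]
    rintro ⟨h', hlt⟩
    rw [rot_apply, rot_apply] at hlt
    have he : (⟨(⟨m - 1, by omega⟩ : Fin (m+1)).val + 1, h'⟩ : Fin (m+1)) = Fin.last m :=
      Fin.ext (show m - 1 + 1 = m from by omega)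
    rw [he, h, Fin.last_add_one] at hlt
    exact absurd hlt (by rw [Fin.lt_def]; simp)
  have key : ascSet A = insert ⟨m - 1, by omega⟩ (ascSet (finRotate (m+1) * A)) := by
    ext i
    rw [mem_ascSet, mem_insert, mem_ascSet]
    by_cases hi : i = (⟨m - 1, by omega⟩ : Fin (m+1))
    · subst hi
      simp only [true_or, iff_true]
      refine ⟨show m - 1 + 1 < m + 1 from by omega, ?_⟩
      have he : (⟨(⟨m - 1, by omega⟩ : Fin (m+1)).val + 1, show m - 1 + 1 < m + 1 from by omega⟩ :
          Fin (m+1)) = Fin.last m := Fin.ext (show m - 1 + 1 = m from by omega)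
      rw [he, h]
      apply lt_of_le_of_ne (Fin.le_last _)
      refine ne_last_of_ne A h ?_
      intro he2
      have : m - 1 = m := congrArg Fin.val he2
      omega
    · have hvm : i.val ≠ m - 1 := by
        intro hv; exact hi (Fin.ext (show i.val = m - 1 from hv))
      have hko : ∀ h' : i.val + 1 < m + 1,
          ((finRotate (m+1) * A) i < (finRotate (m+1) * A) ⟨i.val + 1, h'⟩ ↔
            A i < A ⟨i.val + 1, h'⟩) := by
        intro h'
        rw [rot_apply, rot_apply]
        refine addone_lt_addone (ne_last_of_ne A h ?_) (ne_last_of_ne A h ?_)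
        · intro he
          have : i.val = m := congrArg Fin.val he
          omega
        · intro he
          have : i.val + 1 = m := congrArg Fin.val he
          omega
      simp only [hi, false_or]
      constructor
      · rintro ⟨h', hlt⟩; exact ⟨h', (hko h').2 hlt⟩
      · rintro ⟨h', hlt⟩; exact ⟨h', (hko h').1 hlt⟩
  rw [ascents_eq, ascents_eq, key, card_insert_of_notMem hlast]

lemma ascents_rotate_mid {m : ℕ} (A : Equiv.Perm (Fin (m+1)))
    (h0 : A 0 ≠ Fin.last m) (hl : A (Fin.last m) ≠ Fin.last m) :
    ascents (finRotate (m+1) * A) = ascents A := by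
  have hAp : A (A⁻¹ (Fin.last m)) = Fin.last m := by simp
  set p : Fin (m+1) := A⁻¹ (Fin.last m) with hp
  have hp0 : p ≠ 0 := by
    intro hc; apply h0; rw [← hc]; exact hAp
  have hpl : p ≠ Fin.last m := by
    intro hc; apply hl; rw [← hc, hAp, hc]
  have hpv1 : 0 < p.val := Nat.pos_of_ne_zero (fun hv => hp0 (Fin.ext (show p.val = 0 from hv)))
  have hpv2 : p.val < m := by
    have hle : p.val < m + 1 := p.2
    rcases Nat.lt_or_ge p.val m with h' | h'
    · exact h'
    · exact absurd (Fin.ext (show p.val = m from by omega) : p = Fin.last m) hpl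
  have hqmem : (⟨p.val - 1, by omega⟩ : Fin (m+1)) ∈ ascSet A := by
    rw [mem_ascSet]
    refine ⟨show p.val - 1 + 1 < m + 1 from by omega, ?_⟩
    have he : (⟨(⟨p.val - 1, by omega⟩ : Fin (m+1)).val + 1,
        show p.val - 1 + 1 < m + 1 from by omega⟩ : Fin (m+1)) = p :=
      Fin.ext (show p.val - 1 + 1 = p.val from by omega)
    rw [he, hAp]
    apply lt_of_le_of_ne (Fin.le_last _)
    refine ne_last_of_ne A hAp ?_
    intro he2
    have : p.val - 1 = p.val := congrArg Fin.val he2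
    omega
  have hpnotmem : p ∉ ascSet A := by
    rw [mem_ascSet]
    rintro ⟨h', hlt⟩
    rw [hAp] at hlt
    exact absurd (Fin.le_last _) (not_le.mpr hlt)
  have hpnotmem' : p ∉ (ascSet A).erase ⟨p.val - 1, by omega⟩ :=
    fun hc => hpnotmem (mem_of_mem_erase hc)
  have key : ascSet (finRotate (m+1) * A) = insert p ((ascSet A).erase ⟨p.val - 1, by omega⟩) := by
    ext i
    rw [mem_ascSet, mem_insert, mem_erase, mem_ascSet]
    by_cases hip : i = p
    · subst hip
      simp only [true_or, iff_true]
      refine ⟨by omega, ?_⟩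
      rw [rot_apply, rot_apply, hAp, Fin.last_add_one]
      refine Fin.pos_of_ne_zero (addone_ne_zero (ne_last_of_ne A hAp ?_))
      intro he
      have : p.val + 1 = p.val := congrArg Fin.val he
      omega
    · by_cases hiq : i.val = p.val - 1
      · constructor
        · rintro ⟨h', hlt⟩
          exfalso
          rw [rot_apply, rot_apply] at hlt
          have he : (⟨i.val + 1, h'⟩ : Fin (m+1)) = p :=
            Fin.ext (show i.val + 1 = p.val from by omega)
          rw [he, hAp, Fin.last_add_one] at hlt
          exact absurd hlt (by rw [Fin.lt_def]; simp)
        · rintro (hc | ⟨hne, -⟩)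
          · exact absurd hc hip
          · exact absurd (Fin.ext (show i.val = p.val - 1 from hiq)) hne
      · have hko : ∀ h' : i.val + 1 < m + 1,
            ((finRotate (m+1) * A) i < (finRotate (m+1) * A) ⟨i.val + 1, h'⟩ ↔
              A i < A ⟨i.val + 1, h'⟩) := by
          intro h'
          rw [rot_apply, rot_apply]
          refine addone_lt_addone (ne_last_of_ne A hAp hip) (ne_last_of_ne A hAp ?_)
          intro he
          have : i.val + 1 = p.val := congrArg Fin.val he
          omega
        have hine : i ≠ (⟨p.val - 1, by omega⟩ : Fin (m+1)) := by
          intro hc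
          exact hiq (congrArg Fin.val hc)
        simp only [hip, false_or]
        constructor
        · rintro ⟨h', hlt⟩; exact ⟨hine, h', (hko h').1 hlt⟩
        · rintro ⟨hne, h', hlt⟩; exact ⟨h', (hko h').2 hlt⟩
  rw [ascents_eq, ascents_eq, key, card_insert_of_notMem hpnotmem',
    card_erase_of_mem hqmem]
  have : 0 < (ascSet A).card := card_pos.mpr ⟨_, hqmem⟩
  omega


/-- Extend a permutation of `Fin m` to `Fin (m+1)` fixing the last point. -/
def extLast {m : ℕ} (B : Equiv.Perm (Fin m)) : Equiv.Perm (Fin (m+1)) :=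
  Equiv.permCongr finSuccEquivLast.symm (Equiv.optionCongr B)

@[simp] lemma extLast_castSucc {m : ℕ} (B : Equiv.Perm (Fin m)) (j : Fin m) :
    extLast B (Fin.castSucc j) = Fin.castSucc (B j) := by
  simp [extLast, Equiv.permCongr_apply]

@[simp] lemma extLast_last {m : ℕ} (B : Equiv.Perm (Fin m)) :
    extLast B (Fin.last m) = Fin.last m := by
  simp [extLast, Equiv.permCongr_apply]

lemma extLast_mk {m : ℕ} (B : Equiv.Perm (Fin m)) {a : ℕ} (ha : a < m) (h' : a < m + 1) :
    extLast B ⟨a, h'⟩ = Fin.castSucc (B ⟨a, ha⟩) := by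
  have : (⟨a, h'⟩ : Fin (m+1)) = Fin.castSucc ⟨a, ha⟩ := Fin.ext rfl
  rw [this, extLast_castSucc]

lemma extLast_injective {m : ℕ} : Function.Injective (extLast (m := m)) := by
  intro B C h
  ext j
  have h2 : extLast B (Fin.castSucc j) = extLast C (Fin.castSucc j) := by rw [h]
  rw [extLast_castSucc, extLast_castSucc] at h2
  exact congrArg Fin.val (Fin.castSucc_injective m h2)

lemma sign_extLast {m : ℕ} (B : Equiv.Perm (Fin m)) :
    Perm.sign (extLast B) = Perm.sign B := by
  rw [extLast, Perm.sign_permCongr, Equiv.optionCongr_sign]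

/-- Prepend: the permutation with sequence `m, B 0, B 1, ..., B (m-1)`. -/
def prepend {m : ℕ} (B : Equiv.Perm (Fin m)) : Equiv.Perm (Fin (m+1)) :=
  extLast B * (finRotate (m+1))⁻¹

lemma rotate_inv_zero {m : ℕ} : (finRotate (m+1))⁻¹ 0 = Fin.last m := by
  rw [Equiv.Perm.inv_def, Equiv.symm_apply_eq, finRotate_last]

@[simp] lemma prepend_zero {m : ℕ} (B : Equiv.Perm (Fin m)) :
    prepend B 0 = Fin.last m := by
  rw [prepend, Equiv.Perm.mul_apply, rotate_inv_zero, extLast_last]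

lemma rotate_inv_mk {m : ℕ} {a : ℕ} (h : a + 1 < m + 1) :
    (finRotate (m+1))⁻¹ ⟨a + 1, h⟩ = ⟨a, by omega⟩ := by
  rw [Equiv.Perm.inv_def, Equiv.symm_apply_eq, finRotate_succ_apply]
  apply Fin.ext
  rw [Fin.val_add_one]
  rw [if_neg]
  intro hc
  have : a = m := congrArg Fin.val hc
  omega

lemma prepend_mk {m : ℕ} (B : Equiv.Perm (Fin m)) {a : ℕ} (ha : a < m) (h : a + 1 < m + 1) :
    prepend B ⟨a + 1, h⟩ = Fin.castSucc (B ⟨a, ha⟩) := by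
  rw [prepend, Equiv.Perm.mul_apply, rotate_inv_mk, extLast_mk]

lemma prepend_injective {m : ℕ} : Function.Injective (prepend (m := m)) := by
  intro B C h
  apply extLast_injective
  have := congrArg (fun A => A * finRotate (m+1)) h
  simpa [prepend, mul_assoc] using this

lemma sign_prepend {m : ℕ} (B : Equiv.Perm (Fin m)) :
    Perm.sign (prepend B) = (-1) ^ m * Perm.sign B := by
  rcases Nat.eq_zero_or_pos m with rfl | hm
  · rw [prepend, Perm.sign_mul, sign_extLast, map_inv, sign_finRotate]
    simp
  · obtain ⟨m', rfl⟩ : ∃ m', m = m' + 1 := ⟨m - 1, by omega⟩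
    rw [prepend, Perm.sign_mul, sign_extLast, map_inv, sign_finRotate]
    have : ((-1 : ℤˣ) ^ (m' + 1))⁻¹ = (-1) ^ (m' + 1) := by
      simp
    rw [Nat.add_sub_cancel, this, mul_comm]

lemma ascents_extLast {m : ℕ} (hm : 0 < m) (B : Equiv.Perm (Fin m)) :
    ascents (extLast B) = ascents B + 1 := by
  have hnot : (⟨m - 1, by omega⟩ : Fin (m+1)) ∉ (ascSet B).image Fin.castSucc := by
    intro hc
    rw [Finset.mem_image] at hc
    obtain ⟨j, hj, hjc⟩ := hc
    rw [mem_ascSet] at hj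
    obtain ⟨hj', -⟩ := hj
    have hv : j.val = m - 1 := congrArg Fin.val hjc
    omega
  have key : ascSet (extLast B) =
      insert ⟨m - 1, by omega⟩ ((ascSet B).image Fin.castSucc) := by
    ext i
    rw [mem_ascSet, Finset.mem_insert]
    by_cases him : i.val = m - 1
    · have hieq : i = (⟨m - 1, by omega⟩ : Fin (m+1)) := Fin.ext him
      simp only [hieq, true_or, iff_true]
      refine ⟨show m - 1 + 1 < m + 1 from by omega, ?_⟩
      have hnext : (⟨(⟨m - 1, by omega⟩ : Fin (m+1)).val + 1,
          show m - 1 + 1 < m + 1 from by omega⟩ : Fin (m+1)) = Fin.last m :=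
        Fin.ext (show m - 1 + 1 = m from by omega)
      rw [hnext, extLast_last, extLast_mk (ha := show m - 1 < m from by omega)]
      exact Fin.castSucc_lt_last _
    · constructor
      · rintro ⟨h', hlt⟩
        right
        -- i.val + 1 < m + 1, i.val ≠ m - 1, so i.val + 1 < m
        have hiv : i.val + 1 < m := by
          rcases Nat.lt_or_ge (i.val + 1) m with h2 | h2
          · exact h2
          · exfalso
            rcases Nat.lt_or_ge i.val m with h3 | h3
            · omega
            · -- i.val = m : next index would be ⟨m+1⟩ impossible since h' : i.val+1 < m+1
              omega
        rw [Finset.mem_image]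
        refine ⟨⟨i.val, by omega⟩, ?_, Fin.ext rfl⟩
        rw [mem_ascSet]
        refine ⟨show i.val + 1 < m from hiv, ?_⟩
        rw [extLast_mk (ha := show i.val < m from by omega),
          extLast_mk (ha := show i.val + 1 < m from hiv)] at hlt
        exact Fin.castSucc_lt_castSucc_iff.mp hlt
      · rintro (hc | hc)
        · exact absurd (congrArg Fin.val hc) him
        · rw [Finset.mem_image] at hc
          obtain ⟨j, hj, rfl⟩ := hc
          rw [mem_ascSet] at hj
          obtain ⟨hj', hjlt⟩ := hj
          simp only [Fin.coe_castSucc]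
          refine ⟨by omega, ?_⟩
          rw [extLast_castSucc, extLast_mk (ha := hj')]
          exact Fin.castSucc_lt_castSucc_iff.mpr hjlt
  rw [ascents_eq, ascents_eq, key, Finset.card_insert_of_notMem hnot,
    Finset.card_image_of_injective _ (Fin.castSucc_injective m)]

lemma ascents_prepend {m : ℕ} (B : Equiv.Perm (Fin m)) :
    ascents (prepend B) = ascents B := by
  have hinj : Function.Injective (fun j : Fin m => (⟨j.val + 1, by omega⟩ : Fin (m+1))) := by
    intro a b h
    have := congrArg Fin.val h
    simp only at this
    exact Fin.ext (by omega)
  have key : ascSet (prepend B) = (ascSet B).image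
      (fun j : Fin m => (⟨j.val + 1, by omega⟩ : Fin (m+1))) := by
    ext i
    rw [mem_ascSet, Finset.mem_image]
    constructor
    · rintro ⟨h', hlt⟩
      rcases Nat.eq_zero_or_pos i.val with hi0 | hi0
      · exfalso
        have hz : prepend B i = Fin.last m := by
          rw [show i = 0 from Fin.ext (by simp [hi0]), prepend_zero]
        rw [hz] at hlt
        exact absurd (Fin.le_last _) (not_le.mpr hlt)
      · obtain ⟨a, ha⟩ : ∃ a, i.val = a + 1 := ⟨i.val - 1, by omega⟩
        have ham : a + 1 < m := by omega
        have ham0 : a < m := by omega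
        have ha2 : a + 1 < m + 1 := by omega
        have ha3 : a + 1 + 1 < m + 1 := by omega
        have e1 : prepend B i = Fin.castSucc (B ⟨a, ham0⟩) := by
          rw [show i = ⟨a + 1, ha2⟩ from Fin.ext ha]
          exact prepend_mk B ham0 ha2
        have e2 : prepend B ⟨i.val + 1, h'⟩ = Fin.castSucc (B ⟨a + 1, ham⟩) := by
          rw [show (⟨i.val + 1, h'⟩ : Fin (m+1)) = ⟨a + 1 + 1, ha3⟩ from
            Fin.ext (show i.val + 1 = a + 1 + 1 from by omega)]
          exact prepend_mk B ham ha3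
        rw [e1, e2] at hlt
        refine ⟨⟨a, ham0⟩, ?_, Fin.ext (show a + 1 = i.val from ha.symm)⟩
        rw [mem_ascSet]
        exact ⟨ham, Fin.castSucc_lt_castSucc_iff.mp hlt⟩
    · rintro ⟨j, hj, rfl⟩
      rw [mem_ascSet] at hj
      obtain ⟨hj', hjlt⟩ := hj
      refine ⟨show j.val + 1 + 1 < m + 1 from by omega, ?_⟩
      have e1 : prepend B ⟨j.val + 1, by omega⟩ = Fin.castSucc (B ⟨j.val, j.2⟩) :=
        prepend_mk B j.2 (by omega)
      have e2 : prepend B ⟨j.val + 1 + 1, by omega⟩ = Fin.castSucc (B ⟨j.val + 1, hj'⟩) :=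
        prepend_mk B hj' (by omega)
      rw [e1, e2]
      exact Fin.castSucc_lt_castSucc_iff.mpr hjlt
  rw [ascents_eq, ascents_eq, key, Finset.card_image_of_injective _ hinj]

lemma count_range_even : ∀ M : ℕ, ((Finset.range M).filter (fun i => i % 2 = 0)).card = (M+1)/2 := by
  intro M
  induction M with
  | zero => simp
  | succ M ih =>
    rw [Finset.range_add_one, Finset.filter_insert]
    by_cases h : M % 2 = 0
    · rw [if_pos h, Finset.card_insert_of_notMem (by simp)]
      omega
    · rw [if_neg h]
      omega

lemma count_fin_mod2 {m : ℕ} (c : ℕ) :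
    ((univ : Finset (Fin m)).filter (fun i => i.val % 2 = c)).card
      = (((Finset.range m)).filter (fun i => i % 2 = c)).card := by
  apply Finset.card_nbij (fun i => i.val)
  · intro i hi
    simp only [Finset.mem_coe, Finset.mem_filter, Finset.mem_univ, true_and] at hi
    simp only [Finset.mem_coe, Finset.mem_filter, Finset.mem_range]
    exact ⟨i.2, hi⟩
  · intro a _ b _ h
    exact Fin.ext h
  · intro a ha
    simp only [Finset.coe_filter, Finset.mem_range, Set.mem_setOf_eq] at ha
    exact ⟨⟨a, ha.1⟩, by simp [ha.2], rfl⟩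

lemma count_perm {m : ℕ} (B : Equiv.Perm (Fin m)) (c : ℕ) :
    ((univ : Finset (Fin m)).filter (fun i => (B i).val % 2 = c)).card
      = ((univ : Finset (Fin m)).filter (fun i => i.val % 2 = c)).card := by
  apply Finset.card_nbij (fun i => B i)
  · intro i hi
    simp only [Finset.mem_coe, Finset.mem_filter, Finset.mem_univ, true_and] at hi ⊢
    exact hi
  · intro a _ b _ h
    exact B.injective h
  · intro a ha
    simp only [Finset.coe_filter, Finset.mem_univ, true_and, Set.mem_setOf_eq] at ha
    exact ⟨B⁻¹ a, by simp [ha], by simp⟩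

/-- In a PAP of odd length, every entry has the parity of its position. -/
lemma pap_parity {m : ℕ} (hm : m % 2 = 1) {B : Equiv.Perm (Fin m)} (hB : IsPAP B)
    (i : Fin m) : (B i).val % 2 = i.val % 2 := by
  have hm0 : 0 < m := by omega
  -- step lemma
  have hstep : ∀ a : ℕ, ∀ h : a + 1 < m, ∀ h2 : a < m,
      (B ⟨a + 1, h⟩).val % 2 = ((B ⟨a, h2⟩).val + 1) % 2 := by
    intro a h h2
    have h3 := hB ⟨a, h2⟩ (show (⟨a, h2⟩ : Fin m).val + 1 < m from h)
    have h4 : (B ⟨a, h2⟩).val % 2 ≠ (B ⟨a + 1, h⟩).val % 2 := h3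
    omega
  have hind : ∀ a : ℕ, ∀ h : a < m,
      (B ⟨a, h⟩).val % 2 = ((B ⟨0, hm0⟩).val + a) % 2 := by
    intro a
    induction a with
    | zero =>
      intro h
      have : (⟨0, h⟩ : Fin m) = ⟨0, hm0⟩ := rfl
      rw [this, Nat.add_zero]
    | succ a iha =>
      intro h
      have hal : a < m := by omega
      have e1 := hstep a h hal
      have e2 := iha hal
      omega
  -- first entry is even
  have h0 : (B ⟨0, hm0⟩).val % 2 = 0 := by
    by_contra hodd
    have h1 : (B ⟨0, hm0⟩).val % 2 = 1 := by omega
    have hcount : ((univ : Finset (Fin m)).filter (fun i => (B i).val % 2 = 0)).card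
        = ((univ : Finset (Fin m)).filter (fun i => i.val % 2 = 1)).card := by
      apply Finset.card_nbij (fun i => i)
      · intro i hi
        simp only [Finset.mem_coe, Finset.mem_filter, Finset.mem_univ, true_and] at hi ⊢
        have := hind i.val i.2
        -- careful: B ⟨i.val, i.2⟩ = B i
        have he : (B ⟨i.val, i.2⟩ : Fin m) = B i := rfl
        rw [he] at this
        omega
      · intro a _ b _ h; exact h
      · intro a ha
        simp only [Finset.coe_filter, Finset.mem_univ, true_and, Set.mem_setOf_eq] at ha
        refine ⟨a, ?_, rfl⟩
        simp only [Finset.coe_filter, Finset.mem_univ, true_and, Set.mem_setOf_eq]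
        have := hind a.val a.2
        have he : (B ⟨a.val, a.2⟩ : Fin m) = B a := rfl
        rw [he] at this
        omega
    rw [count_perm B 0, count_fin_mod2, count_fin_mod2] at hcount
    have hc0 := count_range_even m
    have hall : ((Finset.range m).filter (fun i => i % 2 = 1)).card
        = m - ((Finset.range m).filter (fun i => i % 2 = 0)).card := by
      have := Finset.card_filter_add_card_filter_not
        (s := Finset.range m) (p := fun i => i % 2 = 0)
      simp only [Finset.card_range] at this
      have he : ((Finset.range m).filter (fun i => ¬ i % 2 = 0)).card
          = ((Finset.range m).filter (fun i => i % 2 = 1)).card := by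
        apply Finset.card_bij (fun a _ => a) <;> intros <;> simp_all <;> omega
      omega
    omega
  have := hind i.val i.2
  have he : (B ⟨i.val, i.2⟩ : Fin m) = B i := rfl
  rw [he] at this
  omega

lemma pap_extLast {m : ℕ} (hm : m % 2 = 1) (B : Equiv.Perm (Fin m)) :
    IsPAP (extLast B) ↔ IsPAP B := by
  have hm0 : 0 < m := by omega
  constructor
  · intro H j h
    have h' : (Fin.castSucc j).val + 1 < m + 1 := by
      simp only [Fin.coe_castSucc]; omega
    have h3 := H (Fin.castSucc j) h'
    have e1 : extLast B (Fin.castSucc j) = Fin.castSucc (B j) := extLast_castSucc B j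
    have e2 : extLast B ⟨(Fin.castSucc j).val + 1, h'⟩ = Fin.castSucc (B ⟨j.val + 1, h⟩) :=
      extLast_mk B h h'
    rw [e1, e2] at h3
    simpa only [Fin.coe_castSucc] using h3
  · intro hB i h
    have hiv : i.val < m := by omega
    have e1 : extLast B i = Fin.castSucc (B ⟨i.val, hiv⟩) := extLast_mk B hiv i.2
    rcases Nat.lt_or_ge (i.val + 1) m with h2 | h2
    · have e2 : extLast B ⟨i.val + 1, h⟩ = Fin.castSucc (B ⟨i.val + 1, h2⟩) :=
        extLast_mk B h2 h
      have h3 := hB ⟨i.val, hiv⟩ (show i.val + 1 < m from h2)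
      rw [e1, e2]
      simpa only [Fin.coe_castSucc] using h3
    · have hieq : i.val + 1 = m := by omega
      have e2 : extLast B ⟨i.val + 1, h⟩ = Fin.last m := by
        rw [show (⟨i.val + 1, h⟩ : Fin (m+1)) = Fin.last m from Fin.ext hieq]
        exact extLast_last B
      rw [e1, e2]
      simp only [Fin.coe_castSucc, Fin.val_last]
      have hp := pap_parity hm hB ⟨i.val, hiv⟩
      simp only at hp
      omega

lemma pap_prepend {m : ℕ} (hm : m % 2 = 1) (B : Equiv.Perm (Fin m)) :
    IsPAP (prepend B) ↔ IsPAP B := by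
  have hm0 : 0 < m := by omega
  constructor
  · intro H j h
    have h1 : j.val + 1 < m + 1 := by omega
    have h' : (⟨j.val + 1, h1⟩ : Fin (m+1)).val + 1 < m + 1 :=
      show j.val + 1 + 1 < m + 1 by omega
    have h3 := H ⟨j.val + 1, h1⟩ h'
    have e1 : prepend B ⟨j.val + 1, h1⟩ = Fin.castSucc (B ⟨j.val, j.2⟩) :=
      prepend_mk B j.2 h1
    have e2 : prepend B ⟨(⟨j.val + 1, h1⟩ : Fin (m+1)).val + 1, h'⟩
        = Fin.castSucc (B ⟨j.val + 1, h⟩) := prepend_mk B h (by omega)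
    rw [e1, e2] at h3
    have e3 : (B ⟨j.val, j.2⟩ : Fin m) = B j := rfl
    rw [e3] at h3
    simpa only [Fin.coe_castSucc] using h3
  · intro hB i h
    rcases Nat.eq_zero_or_pos i.val with hi0 | hi0
    · have e1 : prepend B i = Fin.last m := by
        rw [show i = 0 from Fin.ext (by simp [hi0]), prepend_zero]
      have e2 : prepend B ⟨i.val + 1, h⟩ = Fin.castSucc (B ⟨0, hm0⟩) := by
        rw [show (⟨i.val + 1, h⟩ : Fin (m+1)) = ⟨0 + 1, by omega⟩ from
          Fin.ext (show i.val + 1 = 0 + 1 from by omega)]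
        exact prepend_mk B hm0 (by omega)
      rw [e1, e2]
      simp only [Fin.val_last, Fin.coe_castSucc]
      have hp := pap_parity hm hB ⟨0, hm0⟩
      simp only at hp
      omega
    · obtain ⟨a, ha⟩ : ∃ a, i.val = a + 1 := ⟨i.val - 1, by omega⟩
      have ham : a + 1 < m := by omega
      have ham0 : a < m := by omega
      have e1 : prepend B i = Fin.castSucc (B ⟨a, ham0⟩) := by
        rw [show i = ⟨a + 1, by omega⟩ from Fin.ext ha]
        exact prepend_mk B ham0 (by omega)
      have e2 : prepend B ⟨i.val + 1, h⟩ = Fin.castSucc (B ⟨a + 1, ham⟩) := by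
        rw [show (⟨i.val + 1, h⟩ : Fin (m+1)) = ⟨a + 1 + 1, by omega⟩ from
          Fin.ext (show i.val + 1 = a + 1 + 1 from by omega)]
        exact prepend_mk B ham (by omega)
      rw [e1, e2]
      have h3 := hB ⟨a, ham0⟩ (show a + 1 < m from ham)
      simpa only [Fin.coe_castSucc] using h3

/-- Restrict a permutation of `Fin (m+1)` fixing the last point to `Fin m`. -/
def shrink {m : ℕ} (A : Equiv.Perm (Fin (m+1))) (h : A (Fin.last m) = Fin.last m) :
    Equiv.Perm (Fin m) where
  toFun i := Fin.castPred (A (Fin.castSucc i)) (by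
    intro hc
    have := A.injective (hc.trans h.symm)
    exact absurd (congrArg Fin.val this) (by simp only [Fin.coe_castSucc, Fin.val_last]; omega))
  invFun i := Fin.castPred (A⁻¹ (Fin.castSucc i)) (by
    intro hc
    have h2 : A⁻¹ (Fin.last m) = Fin.last m := by
      conv_lhs => rw [← h]
      simp
    have := A⁻¹.injective (hc.trans h2.symm)
    exact absurd (congrArg Fin.val this) (by simp only [Fin.coe_castSucc, Fin.val_last]; omega))
  left_inv i := by
    apply Fin.castSucc_injective
    simp [Fin.castSucc_castPred]
  right_inv i := by
    apply Fin.castSucc_injective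
    simp [Fin.castSucc_castPred]

lemma extLast_shrink {m : ℕ} (A : Equiv.Perm (Fin (m+1))) (h : A (Fin.last m) = Fin.last m) :
    extLast (shrink A h) = A := by
  apply Equiv.ext
  intro x
  induction x using Fin.lastCases with
  | last => rw [extLast_last, h]
  | cast j =>
    rw [extLast_castSucc]
    simp only [shrink, Equiv.coe_fn_mk, Fin.castSucc_castPred]

def shrinkT {m : ℕ} (A : Equiv.Perm (Fin (m+1))) : Equiv.Perm (Fin m) :=
  if h : A (Fin.last m) = Fin.last m then shrink A h else 1

lemma shrinkT_extLast {m : ℕ} (B : Equiv.Perm (Fin m)) : shrinkT (extLast B) = B := by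
  rw [shrinkT, dif_pos (extLast_last B)]
  apply extLast_injective
  exact extLast_shrink (extLast B) (extLast_last B)

/-- The signed PAP-count as a sum. -/
noncomputable def W (m j : ℕ) : ℤ :=
  ∑ A ∈ univ.filter (fun A : Equiv.Perm (Fin m) => IsPAP A ∧ ascents A = j), sgn A

lemma sgn_rotate {m : ℕ} (hm : m % 2 = 1) (A : Equiv.Perm (Fin (m+1))) :
    sgn (finRotate (m+1) * A) = - sgn A := by
  rw [sgn, sgn, map_mul, sign_finRotate, Odd.neg_one_pow (by rwa [Nat.odd_iff])]
  push_cast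
  ring

lemma sgn_extLast' {m : ℕ} (B : Equiv.Perm (Fin m)) : sgn (extLast B) = sgn B := by
  rw [sgn, sgn, sign_extLast]

lemma sgn_prepend' {m : ℕ} (hm : m % 2 = 1) (B : Equiv.Perm (Fin m)) :
    sgn (prepend B) = - sgn B := by
  rw [sgn, sgn, sign_prepend, Odd.neg_one_pow (by rwa [Nat.odd_iff])]
  push_cast
  ring

lemma Sl_eq {m : ℕ} (hm : m % 2 = 1) (j : ℕ) (hj : 1 ≤ j) :
    ∑ A ∈ univ.filter (fun A : Equiv.Perm (Fin (m+1)) =>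
        (IsPAP A ∧ ascents A = j) ∧ A (Fin.last m) = Fin.last m), sgn A
      = W m (j - 1) := by
  have hm0 : 0 < m := by omega
  rw [W]
  symm
  apply Finset.sum_nbij' (i := fun B => extLast B) (j := fun A => shrinkT A)
  · intro B hB
    simp only [mem_filter, mem_univ, true_and] at hB ⊢
    refine ⟨⟨(pap_extLast hm B).mpr hB.1, ?_⟩, extLast_last B⟩
    rw [ascents_extLast hm0 B, hB.2]
    omega
  · intro A hA
    simp only [mem_filter, mem_univ, true_and] at hA ⊢
    obtain ⟨⟨hpap, hasc⟩, hL⟩ := hA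
    rw [shrinkT, dif_pos hL]
    have hext := extLast_shrink A hL
    constructor
    · rw [← pap_extLast hm, hext]; exact hpap
    · have := ascents_extLast hm0 (shrink A hL)
      rw [hext] at this
      omega
  · intro B _
    exact shrinkT_extLast B
  · intro A hA
    simp only [mem_filter, mem_univ, true_and] at hA
    rw [shrinkT, dif_pos hA.2]
    exact extLast_shrink A hA.2
  · intro B _
    exact (sgn_extLast' B).symm

lemma Sf_eq {m : ℕ} (hm : m % 2 = 1) (j : ℕ) :
    ∑ A ∈ univ.filter (fun A : Equiv.Perm (Fin (m+1)) =>
        (IsPAP A ∧ ascents A = j) ∧ A 0 = Fin.last m), sgn A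
      = - W m j := by
  have hm0 : 0 < m := by omega
  rw [W, ← Finset.sum_neg_distrib]
  symm
  apply Finset.sum_nbij' (i := fun B => prepend B)
    (j := fun A => shrinkT (A * finRotate (m+1)))
  · intro B hB
    simp only [mem_filter, mem_univ, true_and] at hB ⊢
    exact ⟨⟨(pap_prepend hm B).mpr hB.1, by rw [ascents_prepend, hB.2]⟩, prepend_zero B⟩
  · intro A hA
    simp only [mem_filter, mem_univ, true_and] at hA
    obtain ⟨⟨hpap, hasc⟩, hF⟩ := hA
    have hL : (A * finRotate (m+1)) (Fin.last m) = Fin.last m := by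
      rw [Equiv.Perm.mul_apply, finRotate_last, hF]
    have hpre : prepend (shrinkT (A * finRotate (m+1))) = A := by
      rw [shrinkT, dif_pos hL, prepend, extLast_shrink _ hL, mul_assoc, mul_inv_cancel, mul_one]
    simp only [mem_filter, mem_univ, true_and]
    constructor
    · rw [← pap_prepend hm, hpre]; exact hpap
    · rw [← ascents_prepend (shrinkT (A * finRotate (m+1))), hpre]; exact hasc
  · intro B _
    have : prepend B * finRotate (m+1) = extLast B := by
      rw [prepend, mul_assoc, inv_mul_cancel, mul_one]
    rw [this, shrinkT_extLast]
  · intro A hA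
    simp only [mem_filter, mem_univ, true_and] at hA
    have hL : (A * finRotate (m+1)) (Fin.last m) = Fin.last m := by
      rw [Equiv.Perm.mul_apply, finRotate_last, hA.2]
    rw [shrinkT, dif_pos hL, prepend, extLast_shrink _ hL, mul_assoc, mul_inv_cancel, mul_one]
  · intro B _
    rw [sgn_prepend' hm B]

lemma split3 {m : ℕ} (hm0 : 0 < m) (P : Equiv.Perm (Fin (m+1)) → Prop) [DecidablePred P]
    (f : Equiv.Perm (Fin (m+1)) → ℤ) :
    ∑ A ∈ univ.filter (fun A => P A), f A
      = ∑ A ∈ univ.filter (fun A => P A ∧ A 0 = Fin.last m), f A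
      + ∑ A ∈ univ.filter (fun A => P A ∧ A (Fin.last m) = Fin.last m), f A
      + ∑ A ∈ univ.filter (fun A => P A ∧ ¬ A 0 = Fin.last m ∧ ¬ A (Fin.last m) = Fin.last m),
          f A := by
  have hFL : ∀ A : Equiv.Perm (Fin (m+1)), A (Fin.last m) = Fin.last m → ¬ A 0 = Fin.last m := by
    intro A hL hF
    have := A.injective (hF.trans hL.symm)
    exact absurd (congrArg Fin.val this) (by simp [Fin.val_last]; omega)
  have h1 := Finset.sum_filter_add_sum_filter_not (univ.filter (fun A => P A))
    (fun A => A 0 = Fin.last m) f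
  have h2 := Finset.sum_filter_add_sum_filter_not
    ((univ.filter (fun A => P A)).filter (fun A => ¬ A 0 = Fin.last m))
    (fun A => A (Fin.last m) = Fin.last m) f
  simp only [Finset.filter_filter] at h1 h2
  have e1 : (univ.filter fun a : Equiv.Perm (Fin (m+1)) =>
      (P a ∧ ¬ a 0 = Fin.last m) ∧ a (Fin.last m) = Fin.last m)
      = univ.filter fun A => P A ∧ A (Fin.last m) = Fin.last m := by
    ext A
    simp only [mem_filter, mem_univ, true_and]
    constructor
    · rintro ⟨⟨h1', _⟩, h3⟩; exact ⟨h1', h3⟩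
    · rintro ⟨h1', h3⟩; exact ⟨⟨h1', hFL A h3⟩, h3⟩
  have e2 : (univ.filter fun a : Equiv.Perm (Fin (m+1)) =>
      (P a ∧ ¬ a 0 = Fin.last m) ∧ ¬ a (Fin.last m) = Fin.last m)
      = univ.filter fun A => P A ∧ ¬ A 0 = Fin.last m ∧ ¬ A (Fin.last m) = Fin.last m := by
    ext A
    simp only [mem_filter, mem_univ, true_and]
    tauto
  rw [e1, e2] at h2
  linarith [h1, h2]

lemma val_addone_mod2 {m : ℕ} (hn : Even (m+1)) (x : Fin (m+1)) :
    ((x + 1 : Fin (m+1)).val) % 2 = (x.val + 1) % 2 := by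
  have h1 := Fin.val_add_one x
  split at h1
  · rename_i hx
    rw [h1]
    have : x.val = m := by rw [hx]; rfl
    obtain ⟨c, hc⟩ := hn
    omega
  · rw [h1]


lemma pap_rotate {m : ℕ} (hn : Even (m+1)) (A : Equiv.Perm (Fin (m+1))) :
    IsPAP (finRotate (m+1) * A) ↔ IsPAP A := by
  unfold IsPAP
  refine forall_congr' fun i => forall_congr' fun h => ?_
  rw [rot_apply, rot_apply, val_addone_mod2 hn, val_addone_mod2 hn]
  omega

lemma papSigned_eq_W (n k : ℕ) : papSigned n k = W n k := by
  rw [papSigned, papEven, papOdd, W]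
  have hpt : ∀ A ∈ univ.filter (fun A : Equiv.Perm (Fin n) => IsPAP A ∧ ascents A = k),
      sgn A = if Even (invNum A) then (1 : ℤ) else -1 := by
    intro A _
    rw [sgn_eq_pow]
    split_ifs with h
    · exact Even.neg_one_pow h
    · exact Odd.neg_one_pow (Nat.not_even_iff_odd.mp h)
  rw [Finset.sum_congr rfl hpt, Finset.sum_ite, Finset.sum_const, Finset.sum_const,
    Finset.filter_filter, Finset.filter_filter]
  have e1 : (univ.filter fun a : Equiv.Perm (Fin n) =>
      (IsPAP a ∧ ascents a = k) ∧ Even (invNum a))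
      = univ.filter fun a => IsPAP a ∧ ascents a = k ∧ Even (invNum a) := by
    ext a; simp only [mem_filter, mem_univ, true_and]; tauto
  have e2 : (univ.filter fun a : Equiv.Perm (Fin n) =>
      (IsPAP a ∧ ascents a = k) ∧ ¬ Even (invNum a))
      = univ.filter fun a => IsPAP a ∧ ascents a = k ∧ Odd (invNum a) := by
    ext a
    simp only [mem_filter, mem_univ, true_and, ← Nat.not_even_iff_odd]
    tauto
  rw [e1, e2]
  push_cast
  ring

end PapAux

theorem papSigned_recurrence_even (n k : ℕ) (hn : Even n) (hn0 : 0 < n)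
    (hk1 : 1 ≤ k) (hk2 : k ≤ n - 2) :
    papSigned n k = papSigned (n - 1) (k - 1) - papSigned (n - 1) k := by
  obtain ⟨m, rfl⟩ : ∃ m, n = m + 1 := ⟨n - 1, by omega⟩
  have hm : m % 2 = 1 := by
    obtain ⟨c, hc⟩ := hn
    omega
  have hm0 : 0 < m := by omega
  have hmeven : Even (m + 1) := by rw [Nat.even_iff]; omega
  simp only [Nat.add_sub_cancel]
  rw [PapAux.papSigned_eq_W, PapAux.papSigned_eq_W, PapAux.papSigned_eq_W]
  -- Step B: reindex by the rotation operator
  have hswap : ∑ A ∈ univ.filter (fun A : Equiv.Perm (Fin (m+1)) =>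
        IsPAP A ∧ ascents (finRotate (m+1) * A) = k), PapAux.sgn (finRotate (m+1) * A)
      = ∑ A ∈ univ.filter (fun A : Equiv.Perm (Fin (m+1)) => IsPAP A ∧ ascents A = k),
        PapAux.sgn A := by
    apply Finset.sum_nbij' (i := fun A => finRotate (m+1) * A)
      (j := fun A => (finRotate (m+1))⁻¹ * A)
    · intro A hA
      simp only [mem_filter, mem_univ, true_and] at hA ⊢
      exact ⟨(PapAux.pap_rotate hmeven A).mpr hA.1, hA.2⟩
    · intro A hA
      simp only [mem_filter, mem_univ, true_and] at hA ⊢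
      constructor
      · have := PapAux.pap_rotate hmeven ((finRotate (m+1))⁻¹ * A)
        rw [← mul_assoc, mul_inv_cancel, one_mul] at this
        exact this.mp hA.1
      · rw [← mul_assoc, mul_inv_cancel, one_mul]; exact hA.2
    · intro A _; rw [← mul_assoc, inv_mul_cancel, one_mul]
    · intro A _; rw [← mul_assoc, mul_inv_cancel, one_mul]
    · intro A _; rfl
  have hre : PapAux.W (m+1) k
      = - ∑ A ∈ univ.filter (fun A : Equiv.Perm (Fin (m+1)) =>
          IsPAP A ∧ ascents (finRotate (m+1) * A) = k), PapAux.sgn A := by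
    rw [PapAux.W, ← hswap,
      Finset.sum_congr rfl (fun A _ => PapAux.sgn_rotate hm A)]
    rw [Finset.sum_neg_distrib]
  -- Step C: split both sums into three parts
  have hW1 := PapAux.split3 hm0 (fun A : Equiv.Perm (Fin (m+1)) => IsPAP A ∧ ascents A = k)
    PapAux.sgn
  have hW2 := PapAux.split3 hm0
    (fun A : Equiv.Perm (Fin (m+1)) => IsPAP A ∧ ascents (finRotate (m+1) * A) = k) PapAux.sgn
  -- rewrite the three parts of hW2
  have eTf : (univ.filter fun A : Equiv.Perm (Fin (m+1)) =>
      (IsPAP A ∧ ascents (finRotate (m+1) * A) = k) ∧ A 0 = Fin.last m)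
      = univ.filter fun A => (IsPAP A ∧ ascents A = k - 1) ∧ A 0 = Fin.last m := by
    ext A
    simp only [mem_filter, mem_univ, true_and]
    constructor
    · rintro ⟨⟨hp, ha⟩, hF⟩
      have := PapAux.ascents_rotate_front hm0 A hF
      exact ⟨⟨hp, by omega⟩, hF⟩
    · rintro ⟨⟨hp, ha⟩, hF⟩
      have := PapAux.ascents_rotate_front hm0 A hF
      exact ⟨⟨hp, by omega⟩, hF⟩
  have eTl : (univ.filter fun A : Equiv.Perm (Fin (m+1)) =>
      (IsPAP A ∧ ascents (finRotate (m+1) * A) = k) ∧ A (Fin.last m) = Fin.last m)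
      = univ.filter fun A => (IsPAP A ∧ ascents A = k + 1) ∧ A (Fin.last m) = Fin.last m := by
    ext A
    simp only [mem_filter, mem_univ, true_and]
    constructor
    · rintro ⟨⟨hp, ha⟩, hL⟩
      have := PapAux.ascents_rotate_back hm0 A hL
      exact ⟨⟨hp, by omega⟩, hL⟩
    · rintro ⟨⟨hp, ha⟩, hL⟩
      have := PapAux.ascents_rotate_back hm0 A hL
      exact ⟨⟨hp, by omega⟩, hL⟩
  have eTm : (univ.filter fun A : Equiv.Perm (Fin (m+1)) =>
      (IsPAP A ∧ ascents (finRotate (m+1) * A) = k)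
        ∧ ¬ A 0 = Fin.last m ∧ ¬ A (Fin.last m) = Fin.last m)
      = univ.filter fun A => (IsPAP A ∧ ascents A = k)
        ∧ ¬ A 0 = Fin.last m ∧ ¬ A (Fin.last m) = Fin.last m := by
    ext A
    simp only [mem_filter, mem_univ, true_and]
    constructor
    · rintro ⟨⟨hp, ha⟩, hF, hL⟩
      have := PapAux.ascents_rotate_mid A hF hL
      exact ⟨⟨hp, by omega⟩, hF, hL⟩
    · rintro ⟨⟨hp, ha⟩, hF, hL⟩
      have := PapAux.ascents_rotate_mid A hF hL
      exact ⟨⟨hp, by omega⟩, hF, hL⟩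
  rw [eTf, eTl, eTm] at hW2
  -- Step D: boundary sums
  have hSf1 := PapAux.Sf_eq hm k
  have hSf2 := PapAux.Sf_eq hm (k - 1)
  have hSl1 := PapAux.Sl_eq hm k hk1
  have hSl2 := PapAux.Sl_eq hm (k + 1) (by omega)
  have hk1' : k + 1 - 1 = k := by omega
  rw [hk1'] at hSl2
  rw [hSf1, hSl1] at hW1
  rw [hSf2, hSl2] at hW2
  rw [hW2] at hre
  -- combine
  have hW0 : PapAux.W (m+1) k = ∑ A ∈ univ.filter
      (fun A : Equiv.Perm (Fin (m+1)) => IsPAP A ∧ ascents A = k), PapAux.sgn A := rfl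
  rw [← hW0] at hW1
  linarith [hW1, hre]
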